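/- Let P_n denote the Legendre polynomials. For every real polynomial p(x) = Σ_{k=0}^n a_k P_k(x), the polynomial Σ_{k=0}^n k(k+1) a_k P_k(x) has at most as many non-real zeros (with multiplicity) as p; that is, {k²+k}_{k=0}^∞ is a complex zero decreasing sequence for the Legendre basis. -/

import Mathlib

open Polynomial Finset

open scoped Classical in
/-- Number of non-real complex zeros of a real polynomial, counted with multiplicity. -/
noncomputable def ZC (p : Polynomial ℝ) : ℕ :=
  (((p.map (algebraMap ℝ ℂ)).roots).filter (fun z => z.im ≠ 0)).card

/-- Number of real zeros of a real polynomial, counted with multiplicity. -/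
noncomputable def ZR (p : Polynomial ℝ) : ℕ := p.roots.card

open scoped Classical in
lemma ZC_zero : ZC 0 = 0 := by simp [ZC]

open scoped Classical in
lemma filter_im_zero (p : Polynomial ℝ) :
    ((p.map (algebraMap ℝ ℂ)).roots).filter (fun z => ¬ z.im ≠ 0)
      = p.roots.map (fun r : ℝ => (r : ℂ)) := by
  by_cases hp : p = 0
  · simp [hp]
  have hinj : Function.Injective (algebraMap ℝ ℂ) := (algebraMap ℝ ℂ).injective
  have hmapne : p.map (algebraMap ℝ ℂ) ≠ 0 := by
    simpa [Polynomial.map_ne_zero_iff hinj] using hp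
  ext z
  by_cases hz : z.im = 0
  · have hzre : ((z.re : ℂ)) = z := Complex.ext rfl (by simp [hz])
    rw [Multiset.count_filter_of_pos (by simp [hz])]
    have h1 : ((p.map (algebraMap ℝ ℂ)).roots).count z
        = (p.map (algebraMap ℝ ℂ)).rootMultiplicity z := count_roots _
    have h2 : (p.roots.map (fun r : ℝ => (r : ℂ))).count z
        = p.roots.count z.re := by
      rw [← hzre]
      exact Multiset.count_map_eq_count' _ _ (fun a b h => by exact_mod_cast h) _
    rw [h1, h2, count_roots, ← hzre]
    exact (Polynomial.eq_rootMultiplicity_map hinj z.re).symm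
  · rw [Multiset.count_filter_of_neg (by simp [hz])]
    symm
    rw [Multiset.count_eq_zero]
    intro hmem
    obtain ⟨r, _, hr⟩ := Multiset.mem_map.mp hmem
    exact hz (by rw [← hr]; simp)

open scoped Classical in
lemma ZC_add_ZR (p : Polynomial ℝ) (hp : p ≠ 0) : ZC p + ZR p = p.natDegree := by
  have hinj : Function.Injective (algebraMap ℝ ℂ) := (algebraMap ℝ ℂ).injective
  have hmapne : p.map (algebraMap ℝ ℂ) ≠ 0 := by
    simpa [Polynomial.map_ne_zero_iff hinj] using hp
  have hsplit : Splits (p.map (algebraMap ℝ ℂ)) :=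
    IsAlgClosed.splits _
  have hcard : Multiset.card (p.map (algebraMap ℝ ℂ)).roots
      = (p.map (algebraMap ℝ ℂ)).natDegree := by
    have := (Polynomial.splits_iff_card_roots (f := p.map (algebraMap ℝ ℂ))).mp
      (by simpa using hsplit)
    exact this
  have hfilter := Multiset.filter_add_not (fun z : ℂ => z.im ≠ 0)
    (p.map (algebraMap ℝ ℂ)).roots
  have := congrArg Multiset.card hfilter
  rw [Multiset.card_add] at this
  rw [ZC, ZR]
  have hZR : Multiset.card (((p.map (algebraMap ℝ ℂ)).roots).filter
      (fun z => ¬ z.im ≠ 0)) = Multiset.card p.roots := by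
    rw [filter_im_zero]; simp
  have hm : (p.map (algebraMap ℝ ℂ)).natDegree = p.natDegree :=
    Polynomial.natDegree_map _
  omega

open scoped Classical in
lemma ZC_le_of_ne (p : Polynomial ℝ) (hp : p ≠ 0) : ZC p = p.natDegree - ZR p := by
  have := ZC_add_ZR p hp
  omega

lemma ZR_le_natDegree (p : Polynomial ℝ) : ZR p ≤ p.natDegree := by
  simpa [ZR] using Polynomial.card_roots' p

/-- Key step 1: differentiation does not increase the number of non-real zeros. -/
lemma ZC_derivative_le (p : Polynomial ℝ) : ZC (derivative p) ≤ ZC p := by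
  by_cases hd : derivative p = 0
  · rw [hd, ZC_zero]; exact Nat.zero_le _
  have hp : p ≠ 0 := by rintro rfl; simp at hd
  have hdeg0 : p.natDegree ≠ 0 := by
    intro h
    exact hd (Polynomial.derivative_of_natDegree_zero h)
  have hdegderiv : (derivative p).natDegree = p.natDegree - 1 :=
    Polynomial.natDegree_eq_of_degree_eq_some
      (Polynomial.degree_derivative_eq p (Nat.pos_of_ne_zero hdeg0))
  have hrolle : ZR p ≤ ZR (derivative p) + 1 := by
    simpa [ZR] using Polynomial.card_roots_le_derivative p
  have h1 := ZC_add_ZR p hp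
  have h2 := ZC_add_ZR (derivative p) hd
  have h3 := ZR_le_natDegree p
  omega

open scoped Classical in
lemma ZC_mul (p q : Polynomial ℝ) (hp : p ≠ 0) (hq : q ≠ 0) :
    ZC (p * q) = ZC p + ZC q := by
  have hinj : Function.Injective (algebraMap ℝ ℂ) := (algebraMap ℝ ℂ).injective
  have hpm : p.map (algebraMap ℝ ℂ) ≠ 0 := by
    simpa [Polynomial.map_ne_zero_iff hinj] using hp
  have hqm : q.map (algebraMap ℝ ℂ) ≠ 0 := by
    simpa [Polynomial.map_ne_zero_iff hinj] using hq
  rw [ZC, ZC, ZC, Polynomial.map_mul, Polynomial.roots_mul (mul_ne_zero hpm hqm),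
    Multiset.filter_add, Multiset.card_add]

lemma ZC_X_sq_sub_one : ZC ((X : Polynomial ℝ) ^ 2 - 1) = 0 := by
  have h : ((X : Polynomial ℝ) ^ 2 - 1) = (X - 1) * (X + 1) := by ring
  have h1 : (X - 1 : Polynomial ℝ) ≠ 0 := X_sub_C_ne_zero 1
  have h2 : (X + 1 : Polynomial ℝ) ≠ 0 := by
    have := X_sub_C_ne_zero (-1 : ℝ)
    simpa [sub_neg_eq_add] using this
  rw [h, ZC_mul _ _ h1 h2]
  classical
  have e1 : ZC (X - 1 : Polynomial ℝ) = 0 := by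
    have : ZC (X - 1) = (X - 1 : Polynomial ℝ).natDegree - ZR (X - 1) :=
      ZC_le_of_ne _ h1
    have hn : (X - 1 : Polynomial ℝ).natDegree = 1 := by
      simpa using Polynomial.natDegree_X_sub_C (1 : ℝ)
    have hr : ZR (X - 1 : Polynomial ℝ) = 1 := by
      have : (X - 1 : Polynomial ℝ).roots = {1} := by
        simpa using Polynomial.roots_X_sub_C (1 : ℝ)
      simp [ZR, this]
    omega
  have e2 : ZC (X + 1 : Polynomial ℝ) = 0 := by
    have : ZC (X + 1) = (X + 1 : Polynomial ℝ).natDegree - ZR (X + 1) :=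
      ZC_le_of_ne _ h2
    have hn : (X + 1 : Polynomial ℝ).natDegree = 1 := by
      have := Polynomial.natDegree_X_sub_C (-1 : ℝ)
      simpa [sub_neg_eq_add] using this
    have hr : ZR (X + 1 : Polynomial ℝ) = 1 := by
      have : (X + 1 : Polynomial ℝ).roots = {-1} := by
        have := Polynomial.roots_X_sub_C (-1 : ℝ)
        simpa [sub_neg_eq_add] using this
      simp [ZR, this]
    omega
  omega

/-- Key step 2: the Legendre operator does not increase the number of non-real zeros. -/
lemma ZC_op_le (p : Polynomial ℝ) :
    ZC ((X ^ 2 - 1) * derivative (derivative p) + 2 * X * derivative p) ≤ ZC p := by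
  have hop : (X ^ 2 - 1 : Polynomial ℝ) * derivative (derivative p)
      + 2 * X * derivative p = derivative ((X ^ 2 - 1) * derivative p) := by
    rw [derivative_mul]
    have : derivative ((X : Polynomial ℝ) ^ 2 - 1) = 2 * X := by
      simp only [derivative_sub, derivative_one, derivative_X_pow, sub_zero,
        Nat.cast_ofNat, pow_one]
      norm_num [map_ofNat]
    rw [this]; ring
  rw [hop]
  by_cases hd : derivative p = 0
  · rw [hd, mul_zero, derivative_zero, ZC_zero]; exact Nat.zero_le _
  have hX : (X ^ 2 - 1 : Polynomial ℝ) ≠ 0 := by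
    intro h
    have := congrArg (fun q => Polynomial.coeff q 2) h
    simp [Polynomial.coeff_one] at this
  calc ZC (derivative ((X ^ 2 - 1) * derivative p))
      ≤ ZC ((X ^ 2 - 1) * derivative p) := ZC_derivative_le _
    _ = ZC (X ^ 2 - 1 : Polynomial ℝ) + ZC (derivative p) := ZC_mul _ _ hX hd
    _ = ZC (derivative p) := by rw [ZC_X_sq_sub_one]; ring
    _ ≤ ZC p := ZC_derivative_le p

theorem stmt13 (P : ℕ → Polynomial ℝ) (hdeg : ∀ n, (P n).degree = n)
    (hde : ∀ n, (X ^ 2 - 1) * derivative (derivative (P n)) + 2 * X * derivative (P n)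
        = C ((n : ℝ) * ((n : ℝ) + 1)) * P n)
    (n : ℕ) (a : ℕ → ℝ) :
    ZC (∑ k ∈ Finset.range (n + 1), C ((k : ℝ) * ((k : ℝ) + 1) * a k) * P k)
      ≤ ZC (∑ k ∈ Finset.range (n + 1), C (a k) * P k) := by
  set p : Polynomial ℝ := ∑ k ∈ Finset.range (n + 1), C (a k) * P k with hp
  have key : (∑ k ∈ Finset.range (n + 1), C ((k : ℝ) * ((k : ℝ) + 1) * a k) * P k)
      = (X ^ 2 - 1) * derivative (derivative p) + 2 * X * derivative p := by
    rw [hp]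
    rw [derivative_sum]
    rw [derivative_sum]
    rw [Finset.mul_sum, Finset.mul_sum, ← Finset.sum_add_distrib]
    refine Finset.sum_congr rfl fun k _ => ?_
    have : derivative (derivative (C (a k) * P k)) = C (a k) * derivative (derivative (P k)) := by
      simp [derivative_C_mul]
    rw [this, derivative_C_mul]
    have expand : (X ^ 2 - 1 : Polynomial ℝ) * (C (a k) * derivative (derivative (P k)))
        + 2 * X * (C (a k) * derivative (P k))
        = C (a k) * ((X ^ 2 - 1) * derivative (derivative (P k)) + 2 * X * derivative (P k)) := by
      ring
    rw [expand, hde k, ← mul_assoc, ← C_mul]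
    ring_nf
  rw [key]
  exact ZC_op_le p
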